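/- Let P be a preorder with a superlinear family of translations Ω that is strict, meaning Ω_0 = id_P and Ω_ε ∘ Ω_ζ = Ω_(ε+ζ) as maps P → P for all ε, ζ ≥ 0. Then for any category D and any functors F, G : P ⥤ D, F and G are weakly ε-interleaved with respect to the induced flow −·Ω on D^P if and only if F and G are Ω_ε-interleaved; consequently d_(D^P, −·Ω)(F, G) = d_Ω(F, G). -/

import Mathlib

open CategoryTheory
open scoped NNReal ENNReal

universe v u

/-- A flow on a category `C`: a lax monoidal action of `([0,∞), ≤, +)` on `C`. -/
structure CatFlow (C : Type u) [Category.{v} C] where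
  /-- the `ε`-translation endofunctors -/
  T : ℝ≥0 → C ⥤ C
  /-- the natural transformations `T ε ⟶ T ζ` for `ε ≤ ζ` -/
  Tle : ∀ {ε ζ : ℝ≥0}, ε ≤ ζ → (T ε ⟶ T ζ)
  Tle_refl : ∀ ε : ℝ≥0, Tle (le_refl ε) = 𝟙 (T ε)
  Tle_trans : ∀ {ε ζ δ : ℝ≥0} (h₁ : ε ≤ ζ) (h₂ : ζ ≤ δ), Tle h₁ ≫ Tle h₂ = Tle (h₁.trans h₂)
  /-- the unit coherence natural transformation `𝟭 C ⟶ T 0` -/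
  u : 𝟭 C ⟶ T 0
  /-- the multiplication coherence transformations; note `(T ζ ⋙ T ε).obj a = (T ε).obj ((T ζ).obj a)`,
  which is the composite `T_ε ∘ T_ζ` of the paper. -/
  μ : ∀ ε ζ : ℝ≥0, T ζ ⋙ T ε ⟶ T (ε + ζ)
  unit_left : ∀ (ε : ℝ≥0) (a : C),
    u.app ((T ε).obj a) ≫ (μ 0 ε).app a = eqToHom (by simp)
  unit_right : ∀ (ε : ℝ≥0) (a : C),
    (T ε).map (u.app a) ≫ (μ ε 0).app a = eqToHom (by simp)
  assoc : ∀ (ε ζ δ : ℝ≥0) (a : C),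
    (μ ε ζ).app ((T δ).obj a) ≫ (μ (ε + ζ) δ).app a
      = (T ε).map ((μ ζ δ).app a) ≫ (μ ε (ζ + δ)).app a ≫ eqToHom (by rw [add_assoc])
  compat : ∀ {ε ζ δ κ : ℝ≥0} (h₁ : ε ≤ δ) (h₂ : ζ ≤ κ) (a : C),
    (μ ε ζ).app a ≫ (Tle (add_le_add h₁ h₂)).app a
      = (T ε).map ((Tle h₂).app a) ≫ (Tle h₁).app ((T κ).obj a) ≫ (μ δ κ).app a

/-- `(φ, ψ)` is a weak `ε`-interleaving of `a` and `b`. -/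
structure IsWeakInterleaving {C : Type u} [Category.{v} C] (F : CatFlow C) (ε : ℝ≥0)
    (a b : C) (φ : a ⟶ (F.T ε).obj b) (ψ : b ⟶ (F.T ε).obj a) : Prop where
  left : φ ≫ (F.T ε).map ψ ≫ (F.μ ε ε).app a
      = F.u.app a ≫ (F.Tle (zero_le : 0 ≤ ε + ε)).app a
  right : ψ ≫ (F.T ε).map φ ≫ (F.μ ε ε).app b
      = F.u.app b ≫ (F.Tle (zero_le : 0 ≤ ε + ε)).app b

/-- `a` and `b` are weakly `ε`-interleaved. -/
def WeaklyInterleaved {C : Type u} [Category.{v} C] (F : CatFlow C) (ε : ℝ≥0) (a b : C) : Prop :=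
  ∃ φ ψ, IsWeakInterleaving F ε a b φ ψ

/-- The interleaving distance associated to a flow. -/
noncomputable def interleavingDist {C : Type u} [Category.{v} C] (F : CatFlow C) (a b : C) :
    ℝ≥0∞ :=
  sInf { x : ℝ≥0∞ | ∃ ε : ℝ≥0, x = ε ∧ WeaklyInterleaved F ε a b }

/-- A superlinear family of translations on a preorder `P`. -/
structure SuperlinearFamily (P : Type u) [Preorder P] where
  /-- the underlying translation maps -/
  Ω : ℝ≥0 → P → P
  mono : ∀ ε : ℝ≥0, Monotone (Ω ε)
  le_self : ∀ (ε : ℝ≥0) (p : P), p ≤ Ω ε p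
  mono_eps : ∀ {ε ζ : ℝ≥0}, ε ≤ ζ → ∀ p : P, Ω ε p ≤ Ω ζ p
  superlinear : ∀ (ε ζ : ℝ≥0) (p : P), Ω ε (Ω ζ p) ≤ Ω (ε + ζ) p
universe v₂ u₂

section InducedFlow

variable {P : Type u} [Preorder P] {D : Type u₂} [Category.{v₂} D]

private lemma map_homOfLE_comp_eq_eqToHom (F : P ⥤ D) {p q r : P} (h₁ : p ≤ q) (h₂ : q ≤ r)
    (hpr : p = r) :
    F.map (homOfLE h₁) ≫ F.map (homOfLE h₂) = eqToHom (congrArg F.obj hpr) := by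
  subst hpr
  rw [← F.map_comp, show homOfLE h₁ ≫ homOfLE h₂ = 𝟙 p from Subsingleton.elim _ _,
    F.map_id, eqToHom_refl]

/-- The flow induced on a functor category `P ⥤ D` ("generalized persistence modules")
by a superlinear family of translations on the preorder `P`, given by precomposition. -/
def SuperlinearFamily.inducedFlow (S : SuperlinearFamily P) (D : Type u₂) [Category.{v₂} D] :
    CatFlow (P ⥤ D) where
  T ε := (Functor.whiskeringLeft P P D).obj (S.mono ε).functor
  Tle {ε ζ} h :=
    { app := fun F =>
        { app := fun p => F.map (homOfLE (S.mono_eps h p))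
          naturality := fun p q hpq => by
            dsimp
            repeat erw [← F.map_comp]
            exact congrArg F.map (Subsingleton.elim _ _) }
      naturality := fun F G α => by
        ext p
        exact (α.naturality _).symm }
  Tle_refl ε := by
    ext F p
    dsimp
    simp
  Tle_trans h₁ h₂ := by
    ext F p
    dsimp
    rw [← F.map_comp]
    exact congrArg F.map (Subsingleton.elim _ _)
  u :=
    { app := fun F =>
        { app := fun p => F.map (homOfLE (S.le_self 0 p))
          naturality := fun p q hpq => by
            dsimp
            repeat erw [← F.map_comp]
            exact congrArg F.map (Subsingleton.elim _ _) }
      naturality := fun F G α => by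
        ext p
        exact (α.naturality _).symm }
  μ ε ζ :=
    { app := fun F =>
        { app := fun p => F.map (homOfLE ((S.superlinear ζ ε p).trans
            (S.mono_eps (le_of_eq (add_comm ζ ε)) p)))
          naturality := fun p q hpq => by
            dsimp
            repeat erw [← F.map_comp]
            exact congrArg F.map (Subsingleton.elim _ _) }
      naturality := fun F G α => by
        ext p
        exact (α.naturality _).symm }
  unit_left ε F := by
    ext p
    simp only [NatTrans.comp_app, eqToHom_app]
    dsimp
    exact map_homOfLE_comp_eq_eqToHom F _ _ (by rw [zero_add])
  unit_right ε F := by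
    ext p
    simp only [NatTrans.comp_app, eqToHom_app]
    dsimp
    exact map_homOfLE_comp_eq_eqToHom F _ _ (by rw [add_zero])
  assoc ε ζ δ F := by
    ext p
    simp only [NatTrans.comp_app, eqToHom_app]
    dsimp
    rw [show (eqToHom (by rw [add_assoc]) :
        F.obj (S.Ω (ε + (ζ + δ)) p) ⟶ F.obj (S.Ω (ε + ζ + δ) p)) =
        F.map (eqToHom (by rw [add_assoc])) from (eqToHom_map F _).symm]
    repeat erw [← F.map_comp]
    exact congrArg F.map (Subsingleton.elim _ _)
  compat h₁ h₂ F := by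
    ext p
    simp only [NatTrans.comp_app]
    dsimp
    repeat erw [← F.map_comp]
    exact congrArg F.map (Subsingleton.elim _ _)

end InducedFlow

/-- An `Ω_ε`-interleaving of generalized persistence modules `F, G : P ⥤ D`
(Bubenik–de Silva–Scott style). -/
structure OmegaInterleaving {P : Type u} [Preorder P] {D : Type u₂} [Category.{v₂} D]
    (S : SuperlinearFamily P) (ε : ℝ≥0) (F G : P ⥤ D) where
  φ : F ⟶ (S.mono ε).functor ⋙ G
  ψ : G ⟶ (S.mono ε).functor ⋙ F
  left : ∀ p : P, φ.app p ≫ ψ.app (S.Ω ε p)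
      = F.map (homOfLE ((S.le_self ε p).trans (S.le_self ε (S.Ω ε p))))
  right : ∀ p : P, ψ.app p ≫ φ.app (S.Ω ε p)
      = G.map (homOfLE ((S.le_self ε p).trans (S.le_self ε (S.Ω ε p))))

/-- `F` and `G` are `Ω_ε`-interleaved. -/
def OmegaInterleaved {P : Type u} [Preorder P] {D : Type u₂} [Category.{v₂} D]
    (S : SuperlinearFamily P) (ε : ℝ≥0) (F G : P ⥤ D) : Prop :=
  Nonempty (OmegaInterleaving S ε F G)

/-- The interleaving distance `d_Ω` of generalized persistence modules. -/
noncomputable def dOmega {P : Type u} [Preorder P] {D : Type u₂} [Category.{v₂} D]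
    (S : SuperlinearFamily P) (F G : P ⥤ D) : ℝ≥0∞ :=
  sInf { x : ℝ≥0∞ | ∃ ε : ℝ≥0, x = ε ∧ OmegaInterleaved S ε F G }

private lemma map_homOfLE_eq_eqToHom {P : Type u} [Preorder P] {D : Type u₂} [Category.{v₂} D]
    (F : P ⥤ D) {p q : P} (h : p ≤ q) (hpq : p = q) :
    F.map (homOfLE h) = eqToHom (congrArg F.obj hpq) := by
  subst hpq
  rw [show homOfLE h = 𝟙 p from Subsingleton.elim _ _, F.map_id, eqToHom_refl]

/-- For a *strict* superlinear family of translations (`Ω 0 = id` and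
`Ω ε ∘ Ω ζ = Ω (ε+ζ)` as maps `P → P`), weak `ε`-interleavings for the induced flow on
`D^P` coincide with `Ω_ε`-interleavings, and the two interleaving distances agree. -/
theorem strict_weaklyInterleaved_iff_omegaInterleaved {P : Type u} [Preorder P]
    {D : Type u₂} [Category.{v₂} D] (S : SuperlinearFamily P)
    (h0 : S.Ω 0 = id) (hadd : ∀ ε ζ : ℝ≥0, S.Ω ε ∘ S.Ω ζ = S.Ω (ε + ζ))
    (F G : P ⥤ D) :
    (∀ ε : ℝ≥0, WeaklyInterleaved (S.inducedFlow D) ε F G ↔ OmegaInterleaved S ε F G) ∧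
    interleavingDist (S.inducedFlow D) F G = dOmega S F G := by
  have key : ∀ ε : ℝ≥0, WeaklyInterleaved (S.inducedFlow D) ε F G ↔ OmegaInterleaved S ε F G := by
    intro ε
    have heq : ∀ p : P, S.Ω ε (S.Ω ε p) = S.Ω (ε + ε) p := fun p => congrFun (hadd ε ε) p
    constructor
    · rintro ⟨φ, ψ, hL, hR⟩
      refine ⟨⟨φ, ψ, fun p => ?_, fun p => ?_⟩⟩
      · have hc := NatTrans.congr_app hL p
        dsimp [SuperlinearFamily.inducedFlow] at hc
        replace hc : φ.app p ≫ ψ.app (S.Ω ε p) ≫ F.map (homOfLE ((S.superlinear ε ε p).trans (S.mono_eps (le_of_eq (add_comm ε ε)) p))) = _ := hc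
        erw [map_homOfLE_eq_eqToHom F _ (heq p)] at hc
        erw [← cancel_mono (eqToHom (congrArg F.obj (heq p))), Category.assoc, hc,
          ← eqToHom_map F (heq p), ← F.map_comp, ← F.map_comp]
        exact congrArg F.map (Subsingleton.elim _ _)
      · have hc := NatTrans.congr_app hR p
        dsimp [SuperlinearFamily.inducedFlow] at hc
        replace hc : ψ.app p ≫ φ.app (S.Ω ε p) ≫ G.map (homOfLE ((S.superlinear ε ε p).trans (S.mono_eps (le_of_eq (add_comm ε ε)) p))) = _ := hc
        erw [map_homOfLE_eq_eqToHom G _ (heq p)] at hc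
        erw [← cancel_mono (eqToHom (congrArg G.obj (heq p))), Category.assoc, hc,
          ← eqToHom_map G (heq p), ← G.map_comp, ← G.map_comp]
        exact congrArg G.map (Subsingleton.elim _ _)
    · rintro ⟨I⟩
      refine ⟨I.φ, I.ψ, ⟨?_, ?_⟩⟩
      · ext p
        dsimp [SuperlinearFamily.inducedFlow]
        erw [← Category.assoc, I.left p, ← F.map_comp, ← F.map_comp]
        exact congrArg F.map (Subsingleton.elim _ _)
      · ext p
        dsimp [SuperlinearFamily.inducedFlow]
        erw [← Category.assoc, I.right p, ← G.map_comp, ← G.map_comp]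
        exact congrArg G.map (Subsingleton.elim _ _)
  refine ⟨key, ?_⟩
  unfold interleavingDist dOmega
  congr 1
  ext x
  simp only [key]
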